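/- Under the LLL condition with x(c) = e·p for all c and e·p·(D+1) ≤ 1: for any event E depending on a set vbl(E) of variables that intersects the variable sets of at most m of the constraints, the conditional probability satisfies Pr[E | all A_c avoided] ≤ Pr[E] · (1 − e·p)^{-m}. -/

import Mathlib

open Classical in
/-- Probability of a set `S` of assignments under the product distribution with
single-variable weights `w`. -/
noncomputable def prodPr {V : Type*} [Fintype V] {Q : V → Type*}
    [∀ v, Fintype (Q v)] (w : ∀ v, Q v → ℝ) (S : Set (∀ v, Q v)) : ℝ :=
  ∑ x : ∀ v, Q v, if x ∈ S then ∏ v : V, w v (x v) else 0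

namespace LLLaux

set_option linter.unusedSectionVars false
open Classical Finset

variable {V : Type*} [Fintype V] {Q : V → Type*} [∀ v, Fintype (Q v)]
  (w : ∀ v, Q v → ℝ)

lemma prodPr_def (S : Set (∀ v, Q v)) :
    prodPr w S = ∑ x : ∀ v, Q v, if x ∈ S then ∏ v : V, w v (x v) else 0 := rfl

lemma mu_nonneg (hw : ∀ v x, 0 ≤ w v x) (x : ∀ v, Q v) : 0 ≤ ∏ v : V, w v (x v) :=
  Finset.prod_nonneg fun v _ => hw v _

lemma prodPr_nonneg (hw : ∀ v x, 0 ≤ w v x) (S : Set (∀ v, Q v)) : 0 ≤ prodPr w S := by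
  rw [prodPr_def]
  refine Finset.sum_nonneg fun x _ => ?_
  split
  · exact mu_nonneg w hw x
  · exact le_refl 0

lemma prodPr_mono (hw : ∀ v x, 0 ≤ w v x) {S T : Set (∀ v, Q v)} (h : S ⊆ T) : prodPr w S ≤ prodPr w T := by
  rw [prodPr_def, prodPr_def]
  refine Finset.sum_le_sum fun x _ => ?_
  by_cases hx : x ∈ S
  · rw [if_pos hx, if_pos (h hx)]
  · rw [if_neg hx]
    split
    · exact mu_nonneg w hw x
    · exact le_refl 0

lemma prodPr_empty : prodPr w (∅ : Set (∀ v, Q v)) = 0 := by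
  rw [prodPr_def]; simp

lemma prodPr_univ (hw1 : ∀ v, ∑ x : Q v, w v x = 1) : prodPr w (Set.univ : Set (∀ v, Q v)) = 1 := by
  rw [prodPr_def]
  simp only [Set.mem_univ, if_true]
  classical
  rw [← Fintype.piFinset_univ, ← Finset.prod_univ_sum (fun _ => Finset.univ) (fun v y => w v y)]
  simp [hw1]

lemma prodPr_split (S T : Set (∀ v, Q v)) :
    prodPr w (S ∩ T) + prodPr w (S ∩ Tᶜ) = prodPr w S := by
  rw [prodPr_def, prodPr_def, prodPr_def, ← Finset.sum_add_distrib]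
  refine Finset.sum_congr rfl fun x _ => ?_
  by_cases hS : x ∈ S <;> by_cases hT : x ∈ T <;>
    simp [hS, hT]

/-- `S` is determined by the variables satisfying `P`. -/
def DetP (S : Set (∀ v, Q v)) (P : V → Prop) : Prop :=
  ∀ x y : ∀ v, Q v, (∀ v, P v → x v = y v) → (x ∈ S ↔ y ∈ S)

lemma DetP.mono {S : Set (∀ v, Q v)} {P P' : V → Prop} (h : DetP S P)
    (hPP : ∀ v, P v → P' v) : DetP S P' :=
  fun x y hxy => h x y fun v hv => hxy v (hPP v hv)

theorem prodPr_indep (hw1 : ∀ v, ∑ x : Q v, w v x = 1)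
    {S S' : Set (∀ v, Q v)} {P : V → Prop}
    (hS : DetP S P) (hS' : DetP S' fun v => ¬ P v) :
    prodPr w (S ∩ S') = prodPr w S * prodPr w S' := by
  classical
  have hne : ∀ v, Nonempty (Q v) := by
    intro v
    by_contra h
    rw [not_nonempty_iff] at h
    have := hw1 v
    simp at this
  set e : (∀ v : {v // P v}, Q v) × (∀ v : {v // ¬ P v}, Q v) → (∀ v, Q v) :=
    fun y => (Equiv.piEquivPiSubtypeProd P Q).symm y with he
  obtain ⟨a₀⟩ : Nonempty (∀ v : {v // P v}, Q v) := ⟨fun v => Classical.arbitrary _⟩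
  obtain ⟨b₀⟩ : Nonempty (∀ v : {v // ¬ P v}, Q v) := ⟨fun v => Classical.arbitrary _⟩
  -- membership depends only on relevant component
  have hmemS : ∀ a b, e (a, b) ∈ S ↔ e (a, b₀) ∈ S := by
    intro a b
    refine hS _ _ fun v hv => ?_
    simp [he, Equiv.piEquivPiSubtypeProd_symm_apply, dif_pos hv]
  have hmemS' : ∀ a b, e (a, b) ∈ S' ↔ e (a₀, b) ∈ S' := by
    intro a b
    refine hS' _ _ fun v hv => ?_
    simp [he, Equiv.piEquivPiSubtypeProd_symm_apply, dif_neg hv]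
  -- weight splits
  have hmu : ∀ a b, (∏ v : V, w v (e (a, b) v)) =
      (∏ v : {v // P v}, w v.1 (a v)) * (∏ v : {v // ¬ P v}, w v.1 (b v)) := by
    intro a b
    rw [← Fintype.prod_subtype_mul_prod_subtype P (fun v => w v (e (a, b) v))]
    congr 1
    · refine Finset.prod_congr rfl fun v _ => ?_
      simp [he, Equiv.piEquivPiSubtypeProd_symm_apply, dif_pos v.2]
    · refine Finset.prod_congr rfl fun v _ => ?_
      simp [he, Equiv.piEquivPiSubtypeProd_symm_apply, dif_neg v.2]
  -- rewrite prodPr of any set as a double sum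
  have hsum : ∀ T : Set (∀ v, Q v), prodPr w T =
      ∑ a : ∀ v : {v // P v}, Q v, ∑ b : ∀ v : {v // ¬ P v}, Q v,
        (if e (a, b) ∈ T then 1 else 0) *
          ((∏ v : {v // P v}, w v.1 (a v)) * (∏ v : {v // ¬ P v}, w v.1 (b v))) := by
    intro T
    rw [prodPr_def, ← Equiv.sum_comp (Equiv.piEquivPiSubtypeProd P Q).symm
      (fun x => if x ∈ T then ∏ v : V, w v (x v) else 0), Fintype.sum_prod_type]
    refine Finset.sum_congr rfl fun a _ => Finset.sum_congr rfl fun b _ => ?_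
    rw [← hmu a b]
    by_cases h : e (a, b) ∈ T <;> simp [he, h]
  set WA : (∀ v : {v // P v}, Q v) → ℝ := fun a => ∏ v : {v // P v}, w v.1 (a v) with hWA
  set WB : (∀ v : {v // ¬ P v}, Q v) → ℝ := fun b => ∏ v : {v // ¬ P v}, w v.1 (b v) with hWB
  have hWAsum : ∑ a, WA a = 1 := by
    rw [hWA, ← Fintype.piFinset_univ,
      ← Finset.prod_univ_sum (fun _ => Finset.univ) (fun (v : {v // P v}) y => w v.1 y)]
    simp [hw1]
  have hWBsum : ∑ b, WB b = 1 := by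
    rw [hWB, ← Fintype.piFinset_univ,
      ← Finset.prod_univ_sum (fun _ => Finset.univ) (fun (v : {v // ¬ P v}) y => w v.1 y)]
    simp [hw1]
  have hfac : ∀ (IA : _ → ℝ) (IB : _ → ℝ),
      (∑ a : ∀ v : {v // P v}, Q v, ∑ b : ∀ v : {v // ¬ P v}, Q v,
        (IA a * IB b) * (WA a * WB b)) = (∑ a, IA a * WA a) * (∑ b, IB b * WB b) := by
    intro IA IB
    rw [Finset.sum_mul_sum]
    refine Finset.sum_congr rfl fun a _ => Finset.sum_congr rfl fun b _ => by ring
  have key1 : prodPr w (S ∩ S') =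
      (∑ a, (if e (a, b₀) ∈ S then (1:ℝ) else 0) * WA a) *
      (∑ b, (if e (a₀, b) ∈ S' then (1:ℝ) else 0) * WB b) := by
    rw [hsum (S ∩ S'), ← hfac]
    refine Finset.sum_congr rfl fun a _ => Finset.sum_congr rfl fun b _ => ?_
    have : e (a, b) ∈ S ∩ S' ↔ (e (a, b₀) ∈ S ∧ e (a₀, b) ∈ S') := by
      rw [Set.mem_inter_iff, hmemS a b, hmemS' a b]
    rw [this]
    by_cases h1 : e (a, b₀) ∈ S <;> by_cases h2 : e (a₀, b) ∈ S' <;> simp [h1, h2, hWA, hWB]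
  have key2 : prodPr w S = (∑ a, (if e (a, b₀) ∈ S then (1:ℝ) else 0) * WA a) := by
    have : prodPr w S =
        (∑ a, (if e (a, b₀) ∈ S then (1:ℝ) else 0) * WA a) * (∑ b, 1 * WB b) := by
      rw [hsum S, ← hfac]
      refine Finset.sum_congr rfl fun a _ => Finset.sum_congr rfl fun b _ => ?_
      rw [hmemS a b]
      by_cases h1 : e (a, b₀) ∈ S <;> simp [h1, hWA, hWB]
    simpa [hWBsum] using this
  have key3 : prodPr w S' = (∑ b, (if e (a₀, b) ∈ S' then (1:ℝ) else 0) * WB b) := by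
    have : prodPr w S' =
        (∑ a, 1 * WA a) * (∑ b, (if e (a₀, b) ∈ S' then (1:ℝ) else 0) * WB b) := by
      rw [hsum S', ← hfac]
      refine Finset.sum_congr rfl fun a _ => Finset.sum_congr rfl fun b _ => ?_
      rw [hmemS' a b]
      by_cases h2 : e (a₀, b) ∈ S' <;> simp [h2, hWA, hWB]
    simpa [hWAsum] using this
  rw [key1, key2, key3]

variable [DecidableEq V]

section events

variable {C : Type*} [Fintype C] (A : C → Set (∀ v, Q v)) (vbl : C → Finset V)

/-- the event that all constraints in `S` are avoided -/
def NS (S : Finset C) : Set (∀ v, Q v) := {x | ∀ c ∈ S, x ∉ A c}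

lemma NS_empty : NS A (∅ : Finset C) = Set.univ := by
  ext x; simp [NS]

lemma NS_insert (c : C) (S : Finset C) :
    NS A (insert c S) = NS A S ∩ (A c)ᶜ := by
  ext x; simp [NS]; tauto

lemma NS_mono (hw : ∀ v x, 0 ≤ w v x) {S T : Finset C} (h : S ⊆ T) :
    prodPr w (NS A T) ≤ prodPr w (NS A S) := by
  refine prodPr_mono w hw fun x hx c hc => hx c (h hc)

lemma detP_A (hdet : ∀ c, ∀ x y : ∀ v, Q v, (∀ v ∈ vbl c, x v = y v) → (x ∈ A c ↔ y ∈ A c)) (c : C) : DetP (A c) (fun v => v ∈ vbl c) :=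
  fun x y h => hdet c x y fun v hv => h v hv

lemma detP_NS (hdet : ∀ c, ∀ x y : ∀ v, Q v, (∀ v ∈ vbl c, x v = y v) → (x ∈ A c ↔ y ∈ A c)) (S : Finset C) : DetP (NS A S) (fun v => ∃ c ∈ S, v ∈ vbl c) := by
  intro x y h
  constructor
  · intro hx c hc hy
    exact hx c hc ((hdet c x y fun v hv => h v ⟨c, hc, hv⟩).mpr hy)
  · intro hy c hc hx
    exact hy c hc ((hdet c x y fun v hv => h v ⟨c, hc, hv⟩).mp hx)

/-- Core LLL lemma, multiplicative form. -/
theorem core (hdet : ∀ c, ∀ x y : ∀ v, Q v, (∀ v ∈ vbl c, x v = y v) → (x ∈ A c ↔ y ∈ A c)) (hw : ∀ v x, 0 ≤ w v x) (hw1 : ∀ v, ∑ x : Q v, w v x = 1)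
    (p q : ℝ) (hp0 : 0 ≤ p) (hq0 : 0 ≤ q) (hq1 : q ≤ 1)
    (hp : ∀ c, prodPr w (A c) ≤ p) (D : ℕ)
    (hD : ∀ c : C, Set.ncard {c' : C | c' ≠ c ∧ (vbl c ∩ vbl c').Nonempty} ≤ D)
    (hqD : p ≤ q * (1 - q) ^ D) :
    ∀ (n : ℕ) (S : Finset C), S.card ≤ n → ∀ c : C,
      prodPr w (A c ∩ NS A S) ≤ q * prodPr w (NS A S) := by
  intro n
  induction n with
  | zero =>
    intro S hS c
    have hS0 : S = ∅ := Finset.card_eq_zero.mp (Nat.le_zero.mp hS)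
    subst hS0
    rw [NS_empty, Set.inter_univ, prodPr_univ w hw1, mul_one]
    calc prodPr w (A c) ≤ p := hp c
      _ ≤ q * (1 - q) ^ D := hqD
      _ ≤ q * 1 := by
          refine mul_le_mul_of_nonneg_left ?_ hq0
          exact pow_le_one₀ (by linarith) (by linarith)
      _ = q := mul_one q
  | succ n ih =>
    intro S hS c
    by_cases hc : c ∈ S
    · have : A c ∩ NS A S = ∅ := by
        ext x
        simp only [Set.mem_inter_iff, Set.mem_empty_iff_false, iff_false, not_and]
        intro hx hns
        exact (hns c hc) hx
      rw [this, prodPr_empty]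
      exact mul_nonneg hq0 (prodPr_nonneg w hw _)
    set N : Finset C := S.filter (fun c' => (vbl c ∩ vbl c').Nonempty) with hN
    set S₂ : Finset C := S \ N with hS₂
    have hNsub : N ⊆ S := Finset.filter_subset _ _
    have hS₂sub : S₂ ⊆ S := Finset.sdiff_subset
    have hunion : S₂ ∪ N = S := Finset.sdiff_union_of_subset hNsub
    -- |N| ≤ D
    have hND : N.card ≤ D := by
      have hsub : (↑N : Set C) ⊆ {c' : C | c' ≠ c ∧ (vbl c ∩ vbl c').Nonempty} := by
        intro c' hc'
        simp only [Finset.coe_filter, Set.mem_setOf_eq, hN] at hc'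
        refine ⟨fun h => hc (h ▸ hc'.1), hc'.2⟩
      calc N.card = (↑N : Set C).ncard := (Set.ncard_coe_finset N).symm
        _ ≤ Set.ncard {c' : C | c' ≠ c ∧ (vbl c ∩ vbl c').Nonempty} :=
            Set.ncard_le_ncard hsub (Set.toFinite _)
        _ ≤ D := hD c
    -- independence of A c from NS S₂
    have hindep : prodPr w (A c ∩ NS A S₂) = prodPr w (A c) * prodPr w (NS A S₂) := by
      refine prodPr_indep w hw1 (detP_A A vbl hdet c) ?_
      refine (detP_NS A vbl hdet S₂).mono fun v hv hvc => ?_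
      obtain ⟨c', hc', hv'⟩ := hv
      rw [hS₂, Finset.mem_sdiff, hN, Finset.mem_filter] at hc'
      exact hc'.2 ⟨hc'.1, ⟨v, Finset.mem_inter.mpr ⟨hvc, hv'⟩⟩⟩
    -- peeling lemma
    have peel : ∀ M : Finset C, M ⊆ N →
        (1 - q) ^ M.card * prodPr w (NS A S₂) ≤ prodPr w (NS A (S₂ ∪ M)) := by
      intro M
      induction M using Finset.induction_on with
      | empty => intro _; simp
      | @insert a M ha ihM =>
        intro hsub
        have haN : a ∈ N := hsub (Finset.mem_insert_self a M)
        have hMN : M ⊆ N := fun x hx => hsub (Finset.mem_insert_of_mem hx)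
        have hcard : (S₂ ∪ M).card ≤ n := by
          have h1 : S₂ ∪ M ⊆ S.erase a := by
            intro x hx
            rw [Finset.mem_erase]
            rcases Finset.mem_union.mp hx with h | h
            · refine ⟨?_, hS₂sub h⟩
              rintro rfl
              rw [hS₂, Finset.mem_sdiff] at h
              exact h.2 haN
            · exact ⟨fun he => ha (he ▸ h), hNsub (hMN h)⟩
          calc (S₂ ∪ M).card ≤ (S.erase a).card := Finset.card_le_card h1
            _ = S.card - 1 := Finset.card_erase_of_mem (hNsub haN)
            _ ≤ n := by omega
        have hstep : prodPr w (A a ∩ NS A (S₂ ∪ M)) ≤ q * prodPr w (NS A (S₂ ∪ M)) :=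
          ih (S₂ ∪ M) hcard a
        have heq : S₂ ∪ insert a M = insert a (S₂ ∪ M) := Finset.union_insert a S₂ M
        rw [heq, NS_insert]
        have hsplit := prodPr_split w (NS A (S₂ ∪ M)) (A a)
        have : (1 - q) * prodPr w (NS A (S₂ ∪ M)) ≤ prodPr w (NS A (S₂ ∪ M) ∩ (A a)ᶜ) := by
          have h2 : prodPr w (NS A (S₂ ∪ M) ∩ A a) ≤ q * prodPr w (NS A (S₂ ∪ M)) := by
            rw [Set.inter_comm]; exact hstep
          nlinarith [prodPr_nonneg w hw (NS A (S₂ ∪ M))]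
        calc (1 - q) ^ (insert a M).card * prodPr w (NS A S₂)
            = (1 - q) * ((1 - q) ^ M.card * prodPr w (NS A S₂)) := by
              rw [Finset.card_insert_of_notMem ha]; ring
          _ ≤ (1 - q) * prodPr w (NS A (S₂ ∪ M)) := by
              refine mul_le_mul_of_nonneg_left (ihM hMN) (by linarith)
          _ ≤ prodPr w (NS A (S₂ ∪ M) ∩ (A a)ᶜ) := this
    have hpeelN : (1 - q) ^ N.card * prodPr w (NS A S₂) ≤ prodPr w (NS A S) := by
      have := peel N (le_refl N)
      rwa [hunion] at this
    have hns2 : 0 ≤ prodPr w (NS A S₂) := prodPr_nonneg w hw _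
    calc prodPr w (A c ∩ NS A S)
        ≤ prodPr w (A c ∩ NS A S₂) := by
          refine prodPr_mono w hw (Set.inter_subset_inter_right _ ?_)
          intro x hx c' hc'
          exact hx c' (hS₂sub hc')
      _ = prodPr w (A c) * prodPr w (NS A S₂) := hindep
      _ ≤ p * prodPr w (NS A S₂) := mul_le_mul_of_nonneg_right (hp c) hns2
      _ ≤ (q * (1 - q) ^ D) * prodPr w (NS A S₂) := mul_le_mul_of_nonneg_right hqD hns2
      _ ≤ (q * (1 - q) ^ N.card) * prodPr w (NS A S₂) := by
          refine mul_le_mul_of_nonneg_right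
            (mul_le_mul_of_nonneg_left (pow_le_pow_of_le_one (by linarith) (by linarith) hND) hq0) hns2
      _ = q * ((1 - q) ^ N.card * prodPr w (NS A S₂)) := by ring
      _ ≤ q * prodPr w (NS A S) := mul_le_mul_of_nonneg_left hpeelN hq0

/-- Extension of the core lemma to arbitrary events. -/
theorem ext_lemma
    (hdet : ∀ c, ∀ x y : ∀ v, Q v, (∀ v ∈ vbl c, x v = y v) → (x ∈ A c ↔ y ∈ A c))
    (hw : ∀ v x, 0 ≤ w v x) (hw1 : ∀ v, ∑ x : Q v, w v x = 1)
    (p q : ℝ) (hp0 : 0 ≤ p) (hq0 : 0 ≤ q) (hq1 : q ≤ 1)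
    (hp : ∀ c, prodPr w (A c) ≤ p) (D : ℕ)
    (hD : ∀ c : C, Set.ncard {c' : C | c' ≠ c ∧ (vbl c ∩ vbl c').Nonempty} ≤ D)
    (hqD : p ≤ q * (1 - q) ^ D)
    (E : Set (∀ v, Q v)) (vblE : Finset V)
    (hdetE : ∀ x y : ∀ v, Q v, (∀ v ∈ vblE, x v = y v) → (x ∈ E ↔ y ∈ E)) :
    ∀ (n : ℕ) (S : Finset C), S.card ≤ n →
      (1 - q) ^ ((S.filter (fun c => (vbl c ∩ vblE).Nonempty)).card) *
        prodPr w (E ∩ NS A S) ≤ prodPr w E * prodPr w (NS A S) := by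
  classical
  have hE0 : 0 ≤ prodPr w E := prodPr_nonneg w hw E
  intro n
  induction n with
  | zero =>
    intro S hS
    have hS0 : S = ∅ := Finset.card_eq_zero.mp (Nat.le_zero.mp hS)
    subst hS0
    simp [NS_empty, prodPr_univ w hw1]
  | succ n ih =>
    intro S hS
    set F := S.filter (fun c => (vbl c ∩ vblE).Nonempty) with hF
    by_cases hFe : F = ∅
    · -- independence case
      rw [hFe]
      have hindep : prodPr w (E ∩ NS A S) = prodPr w E * prodPr w (NS A S) := by
        refine prodPr_indep w hw1 (P := fun v => v ∈ vblE) (fun x y h => hdetE x y h) ?_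
        refine (detP_NS A vbl hdet S).mono fun v hv hvE => ?_
        obtain ⟨c, hc, hv'⟩ := hv
        have : c ∈ F := by
          rw [hF, Finset.mem_filter]
          exact ⟨hc, ⟨v, Finset.mem_inter.mpr ⟨hv', hvE⟩⟩⟩
        rw [hFe] at this
        exact absurd this (Finset.notMem_empty c)
      simp [hindep]
    · obtain ⟨c, hcF⟩ := Finset.nonempty_iff_ne_empty.mpr hFe
      have hcS : c ∈ S := Finset.mem_filter.mp (hF ▸ hcF) |>.1
      set S' := S.erase c with hS'
      have hcard : S'.card ≤ n := by
        have h1 : S'.card = S.card - 1 := by rw [hS']; exact Finset.card_erase_of_mem hcS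
        have h2 : 1 ≤ S.card := Finset.card_pos.mpr ⟨c, hcS⟩
        omega
      have hF' : S'.filter (fun c => (vbl c ∩ vblE).Nonempty) = F.erase c := by
        rw [hF, hS', Finset.filter_erase]
      have hFcard : F.card = (F.erase c).card + 1 := by
        have := Finset.card_erase_of_mem hcF
        have : 1 ≤ F.card := Finset.card_pos.mpr ⟨c, hcF⟩
        omega
      have hcore : prodPr w (A c ∩ NS A S') ≤ q * prodPr w (NS A S') :=
        core w A vbl hdet hw hw1 p q hp0 hq0 hq1 hp D hD hqD S'.card S' le_rfl c
      have hNS : NS A S = NS A S' ∩ (A c)ᶜ := by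
        rw [← NS_insert, Finset.insert_erase hcS]
      have h1 : (1 - q) * prodPr w (NS A S') ≤ prodPr w (NS A S) := by
        rw [hNS]
        have hsplit := prodPr_split w (NS A S') (A c)
        have h2 : prodPr w (NS A S' ∩ A c) ≤ q * prodPr w (NS A S') := by
          rw [Set.inter_comm]; exact hcore
        nlinarith [prodPr_nonneg w hw (NS A S')]
      have h2 : prodPr w (E ∩ NS A S) ≤ prodPr w (E ∩ NS A S') := by
        refine prodPr_mono w hw (Set.inter_subset_inter_right _ ?_)
        intro x hx c' hc'
        exact hx c' (Finset.erase_subset c S hc')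
      have hih := ih S' hcard
      rw [hF'] at hih
      calc (1 - q) ^ F.card * prodPr w (E ∩ NS A S)
          ≤ (1 - q) ^ F.card * prodPr w (E ∩ NS A S') := by
            refine mul_le_mul_of_nonneg_left h2 (pow_nonneg (by linarith) _)
        _ = (1 - q) * ((1 - q) ^ (F.erase c).card * prodPr w (E ∩ NS A S')) := by
            rw [hFcard]; ring
        _ ≤ (1 - q) * (prodPr w E * prodPr w (NS A S')) :=
            mul_le_mul_of_nonneg_left hih (by linarith)
        _ = prodPr w E * ((1 - q) * prodPr w (NS A S')) := by ring
        _ ≤ prodPr w E * prodPr w (NS A S) := mul_le_mul_of_nonneg_left h1 hE0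


end events

/-- The arithmetic fact: with `q = e·p` and `e·p·(D+1) ≤ 1`, `p ≤ q(1-q)^D`. -/
lemma arith (p : ℝ) (hp0 : 0 < p) (D : ℕ) (hD1 : 1 ≤ D)
    (hcond : Real.exp 1 * p * ((D : ℝ) + 1) ≤ 1) :
    p ≤ (Real.exp 1 * p) * (1 - Real.exp 1 * p) ^ D := by
  set q := Real.exp 1 * p with hq
  have hd1 : (1:ℝ) ≤ (D:ℝ) := by exact_mod_cast hD1
  have hd0 : (0:ℝ) < (D:ℝ) := by linarith
  have hqpos : 0 < q := mul_pos (Real.exp_pos 1) hp0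
  have hqle : q ≤ 1 / ((D:ℝ) + 1) := by
    rw [le_div_iff₀ (by linarith)]; linarith
  have h1q : (D:ℝ) / ((D:ℝ) + 1) ≤ 1 - q := by
    have : (D:ℝ) / ((D:ℝ) + 1) = 1 - 1 / ((D:ℝ) + 1) := by field_simp; ring
    rw [this]; linarith
  have hfracpos : (0:ℝ) < (D:ℝ) / ((D:ℝ) + 1) := by positivity
  have hexp : ((1:ℝ) + 1 / (D:ℝ)) ^ D ≤ Real.exp 1 := by
    calc ((1:ℝ) + 1 / (D:ℝ)) ^ D ≤ (Real.exp (1 / (D:ℝ))) ^ D := by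
          refine pow_le_pow_left₀ (by positivity) ?_ D
          have := Real.add_one_le_exp (1 / (D:ℝ))
          linarith
      _ = Real.exp ((D:ℝ) * (1 / (D:ℝ))) := (Real.exp_nat_mul _ D).symm
      _ = Real.exp 1 := by rw [mul_one_div, div_self (ne_of_gt hd0)]
  have hbase : ((D:ℝ) / ((D:ℝ) + 1)) = ((1:ℝ) + 1 / (D:ℝ))⁻¹ := by
    have h : (1:ℝ) + 1 / (D:ℝ) = ((D:ℝ) + 1) / (D:ℝ) := by field_simp
    rw [h, inv_div]
  have hinv : ((D:ℝ) / ((D:ℝ) + 1)) ^ D = (((1:ℝ) + 1 / (D:ℝ)) ^ D)⁻¹ := by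
    rw [hbase, inv_pow]
  have hppow : (0:ℝ) < ((1:ℝ) + 1 / (D:ℝ)) ^ D := by positivity
  have h6 : (Real.exp 1)⁻¹ ≤ (((1:ℝ) + 1 / (D:ℝ)) ^ D)⁻¹ :=
    inv_anti₀ hppow hexp
  have h7 : (Real.exp 1)⁻¹ ≤ (1 - q) ^ D := by
    calc (Real.exp 1)⁻¹ ≤ (((1:ℝ) + 1 / (D:ℝ)) ^ D)⁻¹ := h6
      _ = ((D:ℝ) / ((D:ℝ) + 1)) ^ D := hinv.symm
      _ ≤ (1 - q) ^ D := pow_le_pow_left₀ hfracpos.le h1q D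
  calc p = q * (Real.exp 1)⁻¹ := by
        rw [hq]; field_simp [Real.exp_ne_zero]
    _ ≤ q * (1 - q) ^ D := mul_le_mul_of_nonneg_left h7 hqpos.le

end LLLaux

open Classical in
/-- Haeupler–Saha–Srinivasan bound specialized to uniform weights `x(c) = e·p`:
under `e·p·(D+1) ≤ 1`, for any event `E` determined by variables intersecting at
most `m` constraints, `Pr[E | ∧ ¬A_c] ≤ Pr[E]·(1−e·p)^{−m}`. -/
theorem stmt18 {V : Type*} [Fintype V] [DecidableEq V] {Q : V → Type*}
    [∀ v, Fintype (Q v)] {C : Type*} [Fintype C]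
    (w : ∀ v, Q v → ℝ) (hw : ∀ v x, 0 ≤ w v x) (hw1 : ∀ v, ∑ x : Q v, w v x = 1)
    (A : C → Set (∀ v, Q v)) (vbl : C → Finset V)
    (hdet : ∀ c, ∀ x y : ∀ v, Q v, (∀ v ∈ vbl c, x v = y v) → (x ∈ A c ↔ y ∈ A c))
    (E : Set (∀ v, Q v)) (vblE : Finset V)
    (hdetE : ∀ x y : ∀ v, Q v, (∀ v ∈ vblE, x v = y v) → (x ∈ E ↔ y ∈ E))
    (p : ℝ) (hp0 : 0 < p) (hp : ∀ c, prodPr w (A c) ≤ p)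
    (D : ℕ) (hD1 : 1 ≤ D)
    (hD : ∀ c : C, Set.ncard {c' : C | c' ≠ c ∧ (vbl c ∩ vbl c').Nonempty} ≤ D)
    (hcond : Real.exp 1 * p * ((D : ℝ) + 1) ≤ 1)
    (m : ℕ) (hm : Set.ncard {c : C | (vbl c ∩ vblE).Nonempty} ≤ m) :
    prodPr w (E ∩ ⋂ c : C, (A c)ᶜ) / prodPr w (⋂ c : C, (A c)ᶜ) ≤
      prodPr w E * ((1 - Real.exp 1 * p) ^ m)⁻¹ := by
  classical
  set q : ℝ := Real.exp 1 * p with hq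
  have hqpos : 0 < q := mul_pos (Real.exp_pos 1) hp0
  have hq1 : q ≤ 1 / 2 := by
    have hd1 : (1:ℝ) ≤ (D:ℝ) := by exact_mod_cast hD1
    nlinarith
  have hqD : p ≤ q * (1 - q) ^ D := LLLaux.arith p hp0 D hD1 hcond
  have hNuniv : (⋂ c : C, (A c)ᶜ) = LLLaux.NS A (Finset.univ : Finset C) := by
    ext x; simp [LLLaux.NS]
  set k := ((Finset.univ : Finset C).filter (fun c => (vbl c ∩ vblE).Nonempty)).card with hk
  have hkm : k ≤ m := by
    have h1 : {c : C | (vbl c ∩ vblE).Nonempty}.ncard = k := by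
      rw [Set.ncard_eq_toFinset_card', hk]
      congr 1
      ext c
      simp
    omega
  have key := LLLaux.ext_lemma w A vbl hdet hw hw1 p q hp0.le hqpos.le (by linarith) hp D hD hqD
    E vblE hdetE (Finset.univ : Finset C).card (Finset.univ : Finset C) le_rfl
  rw [← hNuniv] at key
  have hEN0 : 0 ≤ prodPr w (E ∩ ⋂ c : C, (A c)ᶜ) := LLLaux.prodPr_nonneg w hw _
  have hN0 : 0 ≤ prodPr w (⋂ c : C, (A c)ᶜ) := LLLaux.prodPr_nonneg w hw _
  have hE0 : 0 ≤ prodPr w E := LLLaux.prodPr_nonneg w hw E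
  have hq12 : (0:ℝ) < 1 - q := by linarith
  have hpm : (0:ℝ) < (1 - q) ^ m := pow_pos hq12 m
  have hpk : (0:ℝ) < (1 - q) ^ k := pow_pos hq12 k
  rcases eq_or_lt_of_le hN0 with hd | hd
  · rw [← hd, div_zero]
    positivity
  · rw [div_le_iff₀ hd]
    have hmk : (1 - q) ^ m ≤ (1 - q) ^ k :=
      pow_le_pow_of_le_one hq12.le (by linarith) hkm
    have h1 : (1 - q) ^ m * prodPr w (E ∩ ⋂ c : C, (A c)ᶜ) ≤
        prodPr w E * prodPr w (⋂ c : C, (A c)ᶜ) := by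
      calc (1 - q) ^ m * prodPr w (E ∩ ⋂ c : C, (A c)ᶜ)
          ≤ (1 - q) ^ k * prodPr w (E ∩ ⋂ c : C, (A c)ᶜ) :=
            mul_le_mul_of_nonneg_right hmk hEN0
        _ ≤ prodPr w E * prodPr w (⋂ c : C, (A c)ᶜ) := by exact key
    calc prodPr w (E ∩ ⋂ c : C, (A c)ᶜ)
        = ((1 - q) ^ m)⁻¹ * ((1 - q) ^ m * prodPr w (E ∩ ⋂ c : C, (A c)ᶜ)) := by
          field_simp
      _ ≤ ((1 - q) ^ m)⁻¹ * (prodPr w E * prodPr w (⋂ c : C, (A c)ᶜ)) :=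
          mul_le_mul_of_nonneg_left h1 (by positivity)
      _ = prodPr w E * ((1 - q) ^ m)⁻¹ * prodPr w (⋂ c : C, (A c)ᶜ) := by ring
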